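/- Let F₁ and F₂ be subspaces of a finite-dimensional vector space E over a field. For every m ≥ 0, the m-th symmetric power of F₁ ∩ F₂, viewed as a subspace of Sym^m(E), equals the intersection of Sym^m(F₁) and Sym^m(F₂) inside Sym^m(E). -/

import Mathlib

/-- The `m`-th symmetric power of a subspace `F` of `E`, viewed (in characteristic zero,
via polarization) as the subspace of the `m`-th tensor power of `E` spanned by the tensors
`v ⊗ v ⊗ ... ⊗ v` for `v ∈ F`. -/
noncomputable def symPow (K : Type*) [Field K] {E : Type*} [AddCommGroup E] [Module K E]
    (m : ℕ) (F : Submodule K E) : Submodule K (PiTensorProduct K (fun _ : Fin m => E)) :=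
  Submodule.span K {x | ∃ v ∈ F, x = PiTensorProduct.tprod K (fun _ : Fin m => v)}

theorem symPow_mono (K : Type*) [Field K] {E : Type*} [AddCommGroup E] [Module K E]
    (m : ℕ) {F F' : Submodule K E} (h : F ≤ F') : symPow K m F ≤ symPow K m F' := by
  apply Submodule.span_mono
  rintro x ⟨v, hv, rfl⟩
  exact ⟨v, h hv, rfl⟩

/-- Let `F₁` and `F₂` be subspaces of a finite-dimensional vector space `E`
over a field of characteristic zero. For every `m ≥ 0`, the `m`-th symmetric power of
`F₁ ⊓ F₂`, viewed as a subspace of `Sym^m(E)`, equals the intersection of `Sym^m(F₁)` and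
`Sym^m(F₂)` inside `Sym^m(E)`. -/
theorem stmt4 {K E : Type*} [Field K] [CharZero K] [AddCommGroup E] [Module K E]
    [FiniteDimensional K E] (F₁ F₂ : Submodule K E) (m : ℕ) :
    symPow K m (F₁ ⊓ F₂) = symPow K m F₁ ⊓ symPow K m F₂ := by
  refine le_antisymm (le_inf (symPow_mono K m inf_le_left) (symPow_mono K m inf_le_right)) ?_
  set G := F₁ ⊓ F₂ with hG
  -- complement of G inside F₂
  obtain ⟨V', hV'⟩ := Submodule.exists_isCompl (G.comap F₂.subtype)
  set V₂ := V'.map F₂.subtype with hV₂def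
  have hGF₂ : G ≤ F₂ := inf_le_right
  have hGV₂_sup : G ⊔ V₂ = F₂ := by
    have h1 : (G.comap F₂.subtype).map F₂.subtype = G := by
      rw [Submodule.map_comap_subtype, inf_eq_right.2 hGF₂]
    calc G ⊔ V₂ = (G.comap F₂.subtype ⊔ V').map F₂.subtype := by
          rw [Submodule.map_sup, h1]
      _ = F₂ := by rw [hV'.sup_eq_top, Submodule.map_subtype_top]
  have hGV₂_inf : ∀ x, x ∈ G → x ∈ V₂ → x = 0 := by
    intro x hxG hxV
    obtain ⟨y, hy, rfl⟩ := hxV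
    have hy' : y ∈ G.comap F₂.subtype ⊓ V' := ⟨hxG, hy⟩
    rw [hV'.inf_eq_bot, Submodule.mem_bot] at hy'
    simp [hy']
  have hF₁V₂ : F₁ ⊓ V₂ = ⊥ := by
    rw [Submodule.eq_bot_iff]
    rintro x ⟨hx1, hx2⟩
    have hxF₂ : x ∈ F₂ := Submodule.map_subtype_le _ _ hx2
    exact hGV₂_inf x ⟨hx1, hxF₂⟩ hx2
  obtain ⟨U, hU⟩ := Submodule.exists_isCompl (F₁ ⊔ V₂)
  have hcompl : IsCompl F₁ (V₂ ⊔ U) := by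
    constructor
    · rw [disjoint_iff, Submodule.eq_bot_iff]
      rintro x ⟨hx1, hx2⟩
      obtain ⟨v, hv, u, hu, rfl⟩ := Submodule.mem_sup.1 hx2
      have hu0 : u ∈ (F₁ ⊔ V₂) ⊓ U :=
        ⟨by
          have : u = (v + u) - v := by abel
          rw [this]
          exact Submodule.sub_mem _ (Submodule.mem_sup_left hx1) (Submodule.mem_sup_right hv),
         hu⟩
      rw [hU.inf_eq_bot] at hu0
      simp only [Submodule.mem_bot] at hu0
      subst hu0
      have : v + 0 ∈ F₁ ⊓ V₂ := ⟨hx1, by simpa using hv⟩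
      rw [hF₁V₂] at this
      simpa using this
    · rw [codisjoint_iff, ← sup_assoc, hU.sup_eq_top]
  set p : E →ₗ[K] E := F₁.subtype ∘ₗ F₁.projectionOnto (V₂ ⊔ U) hcompl with hp
  have hp1 : ∀ x ∈ F₁, p x = x := by
    intro x hx
    simp [hp, Submodule.projectionOnto_apply_of_mem_left hcompl hx]
  have hp0 : ∀ x ∈ V₂, p x = 0 := by
    intro x hx
    simp [hp, Submodule.projectionOnto_apply_of_mem_right hcompl
      (Submodule.mem_sup_left hx)]
  have hp2 : ∀ x ∈ F₂, p x ∈ G := by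
    intro x hx
    rw [← hGV₂_sup] at hx
    obtain ⟨g, hg, w, hw, rfl⟩ := Submodule.mem_sup.1 hx
    rw [map_add, hp1 g hg.1, hp0 w hw, add_zero]
    exact hg
  set P := PiTensorProduct.map (fun _ : Fin m => p) with hP
  rintro x ⟨hx1, hx2⟩
  have hPx : P x = x := by
    have hle : symPow K m F₁ ≤ LinearMap.eqLocus P LinearMap.id := by
      apply Submodule.span_le.2
      rintro y ⟨v, hv, rfl⟩
      show P _ = LinearMap.id _
      rw [hP, PiTensorProduct.map_tprod, LinearMap.id_apply]
      congr 1
      funext i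
      exact hp1 v hv
    exact hle hx1
  have hmem : P x ∈ symPow K m G := by
    have hmap : Submodule.map P (symPow K m F₂) ≤ symPow K m G := by
      rw [symPow, Submodule.map_span, Submodule.span_le]
      rintro y ⟨y', ⟨v, hv, rfl⟩, rfl⟩
      refine Submodule.subset_span ⟨p v, hp2 v hv, ?_⟩
      rw [hP, PiTensorProduct.map_tprod]
    exact hmap ⟨x, hx2, rfl⟩
  rwa [hPx] at hmem
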